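/- arXiv:2003.00363 — 2 statements merged into one kernel-verified Lean document; each statement's English description precedes it below -/
import Mathlib

section
/- Let m ≥ 1 and let c⁽⁰⁾, c⁽¹⁾, c⁽²⁾ be any three permutations of {1, 2, …, m}. Then there exist two distinct indices k, ℓ ∈ {0, 1, 2} and a common subpermutation of length at least m^(1/3) contained in both c⁽ᵏ⁾ and c⁽ˡ⁾; that is, there exist subsequences of c⁽ᵏ⁾ and of c⁽ˡ⁾, each of length at least m^(1/3), that are order-isomorphic to each other. -/
def chainLen {m : ℕ} (f : Fin m → Fin m) (t : Fin m) : ℕ :=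
  1 + ((Finset.univ.filter fun s => s < t ∧ f s < f t).attach.sup
        fun s => chainLen f s.1)
termination_by t.1
decreasing_by
  have h := s.2
  simp only [Finset.mem_filter] at h
  exact h.2.1

lemma chainLen_pos {m : ℕ} (f : Fin m → Fin m) (t : Fin m) : 1 ≤ chainLen f t := by
  rw [chainLen]; omega

lemma chainLen_lt {m : ℕ} (f : Fin m → Fin m) {s t : Fin m}
    (h1 : s < t) (h2 : f s < f t) : chainLen f s < chainLen f t := by
  conv_rhs => rw [chainLen]
  have hs : s ∈ Finset.univ.filter fun s => s < t ∧ f s < f t := by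
    simp [h1, h2]
  have h3 : chainLen f s ≤
      (Finset.univ.filter fun s => s < t ∧ f s < f t).attach.sup fun x => chainLen f x.1 :=
    Finset.le_sup (f := fun x : {x // x ∈ Finset.univ.filter fun s => s < t ∧ f s < f t} =>
      chainLen f x.1) (Finset.mem_attach _ ⟨s, hs⟩)
  omega

lemma snoc_mono {m n : ℕ} (i0 : Fin n → Fin m) (t : Fin m)
    (h1 : StrictMono i0) (h2 : ∀ a, i0 a < t) :
    StrictMono (fun a : Fin (n+1) => if h : (a : ℕ) < n then i0 ⟨a, h⟩ else t) := by
  intro a b hab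
  have hav := a.isLt
  have hbv := b.isLt
  have hab' : (a : ℕ) < (b : ℕ) := hab
  by_cases ha : (a : ℕ) < n <;> by_cases hb : (b : ℕ) < n <;>
      simp only [ha, hb, dif_pos, dif_neg, not_false_iff]
  · exact h1 (show (⟨(a:ℕ), ha⟩ : Fin n) < ⟨(b:ℕ), hb⟩ from hab')
  · exact h2 _
  · omega
  · omega

lemma chainLen_spec {m : ℕ} (f : Fin m → Fin m) (t : Fin m) :
    ∃ i : Fin (chainLen f t) → Fin m, StrictMono i ∧ StrictMono (f ∘ i) ∧
      ∀ a, i a ≤ t ∧ f (i a) ≤ f t := by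
  suffices h : ∀ (N : ℕ) (t : Fin m), (t : ℕ) < N →
      ∃ i : Fin (chainLen f t) → Fin m, StrictMono i ∧ StrictMono (f ∘ i) ∧
        ∀ a, i a ≤ t ∧ f (i a) ≤ f t from h m t t.isLt
  intro N
  induction N with
  | zero => omega
  | succ N IH =>
  intro t ht
  set S := Finset.univ.filter (fun s => s < t ∧ f s < f t) with hS
  by_cases hne : S.Nonempty
  · obtain ⟨s, _, hsup⟩ := Finset.exists_mem_eq_sup S.attach
      (Finset.attach_nonempty_iff.mpr hne) (fun x => chainLen f x.1)
    obtain ⟨hst, hfst⟩ : s.1 < t ∧ f s.1 < f t := by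
      have h := s.2
      simp only [hS, Finset.mem_filter, Finset.mem_univ, true_and] at h
      exact h
    obtain ⟨i0, hi1, hi2, hi3⟩ := IH s.1 (by have : (s.1 : ℕ) < (t : ℕ) := hst; omega)
    have hlen : chainLen f t = chainLen f s.1 + 1 := by
      rw [chainLen, ← hS, hsup]; omega
    rw [hlen]
    refine ⟨fun a => if h : (a : ℕ) < chainLen f s.1 then i0 ⟨a, h⟩ else t, ?_, ?_, ?_⟩
    · exact snoc_mono i0 t hi1 (fun a => lt_of_le_of_lt (hi3 a).1 hst)
    · have heq : (f ∘ fun a : Fin (chainLen f s.1 + 1) =>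
          if h : (a : ℕ) < chainLen f s.1 then i0 ⟨a, h⟩ else t) =
          (fun a : Fin (chainLen f s.1 + 1) =>
          if h : (a : ℕ) < chainLen f s.1 then (f ∘ i0) ⟨a, h⟩ else f t) := by
        funext a
        by_cases h : (a : ℕ) < chainLen f s.1 <;> simp [h]
      rw [heq]
      exact snoc_mono (f ∘ i0) (f t) hi2
        (fun a => lt_of_le_of_lt (hi3 a).2 hfst)
    · intro a
      by_cases h : (a : ℕ) < chainLen f s.1 <;> simp only [h, dif_pos, dif_neg, not_false_iff]
      · exact ⟨le_of_lt (lt_of_le_of_lt (hi3 _).1 hst), le_of_lt (lt_of_le_of_lt (hi3 _).2 hfst)⟩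
      · exact ⟨le_refl _, le_refl _⟩
  · have hempty : S = ∅ := Finset.not_nonempty_iff_eq_empty.mp hne
    have hlen : chainLen f t = 1 := by
      rw [chainLen, ← hS, hempty]; simp
    rw [hlen]
    refine ⟨fun _ => t, ?_, ?_, fun a => ⟨le_refl _, le_refl _⟩⟩
    · intro a b hab; have := a.isLt; have := b.isLt
      have : (a:ℕ) < (b:ℕ) := hab; omega
    · intro a b hab; have := a.isLt; have := b.isLt
      have : (a:ℕ) < (b:ℕ) := hab; omega

lemma key_lemma {m : ℕ} (hm : 1 ≤ m) (f g : Fin m → Fin m)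
    (hf : Function.Injective f) (hg : Function.Injective g) :
    ∃ L : ℕ, m ≤ L ^ 3 ∧
      ((∃ i : Fin L → Fin m, StrictMono i ∧ StrictMono (f ∘ i)) ∨
       (∃ i : Fin L → Fin m, StrictMono i ∧ StrictMono (g ∘ i)) ∨
       (∃ i : Fin L → Fin m, StrictMono (f ∘ i) ∧ StrictMono (g ∘ i))) := by
  have hmne : (Finset.univ : Finset (Fin m)).Nonempty := ⟨⟨0, hm⟩, Finset.mem_univ _⟩
  set A : Fin m → ℕ := chainLen f with hA
  set B : Fin m → ℕ := chainLen g with hB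
  set a := Finset.univ.sup A with ha
  set b := Finset.univ.sup B with hb
  have ha1 : 1 ≤ a := le_trans (chainLen_pos f ⟨0, hm⟩) (Finset.le_sup (Finset.mem_univ _))
  have hb1 : 1 ≤ b := le_trans (chainLen_pos g ⟨0, hm⟩) (Finset.le_sup (Finset.mem_univ _))
  set n := (m - 1) / (a * b) with hn
  -- pigeonhole: some fiber of t ↦ (A t, B t) has more than n elements
  have hmaps : ∀ t ∈ (Finset.univ : Finset (Fin m)),
      (A t, B t) ∈ Finset.Icc 1 a ×ˢ Finset.Icc 1 b := by
    intro t _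
    simp only [Finset.mem_product, Finset.mem_Icc]
    exact ⟨⟨chainLen_pos f t, Finset.le_sup (Finset.mem_univ _)⟩,
           ⟨chainLen_pos g t, Finset.le_sup (Finset.mem_univ _)⟩⟩
  have hcard : (Finset.Icc 1 a ×ˢ Finset.Icc 1 b).card * n <
      (Finset.univ : Finset (Fin m)).card := by
    rw [Finset.card_product, Nat.card_Icc, Nat.card_Icc, Finset.card_univ, Fintype.card_fin,
      Nat.add_sub_cancel, Nat.add_sub_cancel]
    calc a * b * n = n * (a * b) := by ring
      _ ≤ m - 1 := Nat.div_mul_le_self _ _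
      _ < m := by omega
  obtain ⟨y, hy, hylt⟩ := Finset.exists_lt_card_fiber_of_mul_lt_card_of_maps_to hmaps hcard
  set F := Finset.univ.filter fun t : Fin m => (A t, B t) = y with hF
  -- the fiber is decreasing in both f and g
  have hfib : ∀ u ∈ F, ∀ v ∈ F, u < v → f v < f u ∧ g v < g u := by
    intro u hu v hv huv
    simp only [hF, Finset.mem_filter, Finset.mem_univ, true_and] at hu hv
    have hAB : A u = A v ∧ B u = B v := by
      constructor
      · have := hu ▸ hv; exact congrArg Prod.fst (hu.trans hv.symm)
      · exact congrArg Prod.snd (hu.trans hv.symm)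
    constructor
    · rcases lt_trichotomy (f u) (f v) with h | h | h
      · exact absurd (chainLen_lt f huv h) (by rw [← hA]; omega)
      · exact absurd (hf h) (ne_of_lt huv)
      · exact h
    · rcases lt_trichotomy (g u) (g v) with h | h | h
      · exact absurd (chainLen_lt g huv h) (by rw [← hB]; omega)
      · exact absurd (hg h) (ne_of_lt huv)
      · exact h
  -- the length
  refine ⟨max a (max b (n + 1)), ?_, ?_⟩
  · have hab1 : 1 ≤ a * b := Nat.one_le_iff_ne_zero.mpr (by positivity)
    have h1 : m ≤ a * b * (n + 1) := by
      have hd' : a * b * n + (m - 1) % (a * b) = m - 1 := by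
        rw [hn]; exact Nat.div_add_mod (m - 1) (a * b)
      have hmod : (m - 1) % (a * b) < a * b := Nat.mod_lt _ (by omega)
      have hx : a * b * (n + 1) = a * b * n + a * b := by ring
      omega
    set L := max a (max b (n + 1)) with hL
    have : a * b * (n + 1) ≤ L ^ 3 := by
      have e1 : a ≤ L := le_max_left _ _
      have e2 : b ≤ L := le_trans (le_max_left _ _) (le_max_right _ _)
      have e3 : n + 1 ≤ L := le_trans (le_max_right _ _) (le_max_right _ _)
      calc a * b * (n + 1) ≤ L * L * L := by
            exact Nat.mul_le_mul (Nat.mul_le_mul e1 e2) e3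
        _ = L ^ 3 := by ring
    omega
  · rcases max_choice a (max b (n + 1)) with hmax | hmax
    · -- L = a : increasing chain for f
      left
      obtain ⟨t, _, hts⟩ := Finset.exists_mem_eq_sup Finset.univ hmne A
      have : max a (max b (n + 1)) = chainLen f t := by rw [hmax, ha, hts, hA]
      rw [this]
      obtain ⟨i, h1, h2, _⟩ := chainLen_spec f t
      exact ⟨i, h1, h2⟩
    · rw [hmax]
      rcases max_choice b (n + 1) with hmax2 | hmax2
      · right; left
        obtain ⟨t, _, hts⟩ := Finset.exists_mem_eq_sup Finset.univ hmne B
        have : max b (n + 1) = chainLen g t := by rw [hmax2, hb, hts, hB]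
        rw [this]
        obtain ⟨i, h1, h2, _⟩ := chainLen_spec g t
        exact ⟨i, h1, h2⟩
      · right; right
        rw [hmax2]
        obtain ⟨F', hF'sub, hF'card⟩ := Finset.exists_subset_card_eq (hylt : n + 1 ≤ F.card)
        set e := F'.orderEmbOfFin hF'card with he
        refine ⟨fun x => e x.rev, ?_, ?_⟩
        · intro p q hpq
          have hrev : q.rev < p.rev := by rwa [Fin.rev_lt_rev]
          have hlt : e q.rev < e p.rev := e.strictMono hrev
          exact (hfib _ (hF'sub (F'.orderEmbOfFin_mem hF'card q.rev))
            _ (hF'sub (F'.orderEmbOfFin_mem hF'card p.rev)) hlt).1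
        · intro p q hpq
          have hrev : q.rev < p.rev := by rwa [Fin.rev_lt_rev]
          have hlt : e q.rev < e p.rev := e.strictMono hrev
          exact (hfib _ (hF'sub (F'.orderEmbOfFin_mem hF'card q.rev))
            _ (hF'sub (F'.orderEmbOfFin_mem hF'card p.rev)) hlt).2


/-- Among any three permutations of `[m]` (here permutations of `Fin m`), two distinct
ones contain a common subpermutation of length at least `m^(1/3)`: they have
subsequences (given by strictly increasing index maps) of that length that are
order-isomorphic to each other. -/
theorem three_perms_common_subpermutation (m : ℕ) (hm : 1 ≤ m)
    (c : Fin 3 → Equiv.Perm (Fin m)) :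
    ∃ k ℓ : Fin 3, k ≠ ℓ ∧
      ∃ L : ℕ, (m : ℝ) ^ ((1 : ℝ) / 3) ≤ (L : ℝ) ∧
        ∃ i j : Fin L → Fin m, StrictMono i ∧ StrictMono j ∧
          ∀ a b, (c k (i a) < c k (i b) ↔ c ℓ (j a) < c ℓ (j b)) := by
  set f : Fin m → Fin m := fun t => (c 1)⁻¹ (c 0 t) with hf
  set g : Fin m → Fin m := fun t => (c 2)⁻¹ (c 0 t) with hg
  have hfinj : Function.Injective f := fun x y h => by
    have := (c 1)⁻¹.injective h
    exact (c 0).injective this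
  have hginj : Function.Injective g := fun x y h => by
    have := (c 2)⁻¹.injective h
    exact (c 0).injective this
  obtain ⟨L, hL3, hcase⟩ := key_lemma hm f g hfinj hginj
  have hLr : (m : ℝ) ^ ((1 : ℝ) / 3) ≤ (L : ℝ) := by
    have h0 : (m : ℝ) ≤ (L : ℝ) ^ (3 : ℕ) := by exact_mod_cast hL3
    have h1 : (m : ℝ) ^ ((1 : ℝ) / 3) ≤ ((L : ℝ) ^ (3 : ℕ)) ^ ((1 : ℝ) / 3) :=
      Real.rpow_le_rpow (by positivity) h0 (by norm_num)
    have h2 : ((L : ℝ) ^ (3 : ℕ)) ^ ((1 : ℝ) / 3) = (L : ℝ) := by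
      rw [← Real.rpow_natCast (L : ℝ) 3, ← Real.rpow_mul (Nat.cast_nonneg L)]
      norm_num
    rwa [h2] at h1
  have hinv1 : ∀ x, c 1 (f x) = c 0 x := fun x => (c 1).apply_symm_apply _
  have hinv2 : ∀ x, c 2 (g x) = c 0 x := fun x => (c 2).apply_symm_apply _
  rcases hcase with ⟨i, h1, h2⟩ | ⟨i, h1, h2⟩ | ⟨i, h1, h2⟩
  · refine ⟨0, 1, by decide, L, hLr, i, f ∘ i, h1, h2, fun a b => ?_⟩
    simp only [Function.comp_apply, hinv1]
  · refine ⟨0, 2, by decide, L, hLr, i, g ∘ i, h1, h2, fun a b => ?_⟩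
    simp only [Function.comp_apply, hinv2]
  · refine ⟨1, 2, by decide, L, hLr, f ∘ i, g ∘ i, h1, h2, fun a b => ?_⟩
    simp only [Function.comp_apply, hinv1, hinv2]
end

section
/- Let p = (p_1,…,p_n) be a permutation of {1,…,n}, let r ≥ 1, and partition the position set {1,…,n} into r pairwise disjoint intervals P_1,…,P_r and the value set {1,…,n} into r pairwise disjoint intervals V_1,…,V_r. Form the bipartite graph B on two copies of {1,…,r} where (i, j) is an edge whenever there are at least two positions x ∈ P_i with p_x ∈ V_j. Then for every matching M in B, the permutation p contains a pair of twins of length |M|. -/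
/-- `HasTwins n L p` means the permutation `p` of `{0,…,n-1}` contains a pair of twins
of length `L`: two order-isomorphic subsequences with disjoint index sets. -/
def HasTwins (n L : ℕ) (p : Equiv.Perm (Fin n)) : Prop :=
  ∃ i j : Fin L → Fin n, StrictMono i ∧ StrictMono j ∧
    (∀ k l, i k ≠ j l) ∧
    (∀ k l, p (i k) < p (i l) ↔ p (j k) < p (j l))

/-- Separation lemma: two disjoint order-convex finsets are completely separated. -/
lemma convex_sep {n : ℕ} {A B : Finset (Fin n)}
    (hA : ∀ x y z : Fin n, x ∈ A → z ∈ A → x ≤ y → y ≤ z → y ∈ A)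
    (hB : ∀ x y z : Fin n, x ∈ B → z ∈ B → x ≤ y → y ≤ z → y ∈ B)
    (hdisj : Disjoint A B) {a b c d : Fin n}
    (ha : a ∈ A) (hb : b ∈ A) (hc : c ∈ B) (hd : d ∈ B) (h : a < c) : b < d := by
  by_contra h'
  push_neg at h'
  have hdb : d < b := lt_of_le_of_ne h' (by
    rintro rfl
    exact Finset.disjoint_left.mp hdisj hb hd)
  rcases le_or_gt c b with hcb | hbc
  · exact Finset.disjoint_left.mp hdisj (hA a c b ha hb h.le hcb) hc
  · exact Finset.disjoint_left.mp hdisj hb (hB d b c hd hc hdb.le hbc.le)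

/-- Partition the positions of a permutation `p` of `{0,…,n-1}` into `r` intervals
`P 1,…,P r` and the values into `r` intervals `V 1,…,V r`, and form the bipartite graph
on two copies of `{1,…,r}` where `(i, j)` is an edge when at least two positions in
`P i` carry values in `V j`. Then every matching `M` in this graph yields a pair of
twins of length `M.card` in `p`. -/
theorem matching_gives_twins (n r : ℕ) (hr : 1 ≤ r) (p : Equiv.Perm (Fin n))
    (P V : Fin r → Finset (Fin n))
    -- each P i and each V j is an interval (order-convex set)
    (hPconv : ∀ i, ∀ x y z : Fin n, x ∈ P i → z ∈ P i → x ≤ y → y ≤ z → y ∈ P i)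
    (hVconv : ∀ j, ∀ x y z : Fin n, x ∈ V j → z ∈ V j → x ≤ y → y ≤ z → y ∈ V j)
    -- the P's partition the positions, the V's partition the values
    (hPdisj : ∀ i i', i ≠ i' → Disjoint (P i) (P i'))
    (hVdisj : ∀ j j', j ≠ j' → Disjoint (V j) (V j'))
    (hPcover : ∀ x : Fin n, ∃ i, x ∈ P i)
    (hVcover : ∀ y : Fin n, ∃ j, y ∈ V j)
    -- M is a matching consisting of edges of the bipartite graph B
    (M : Finset (Fin r × Fin r))
    (hedge : ∀ e ∈ M, 2 ≤ ((P e.1).filter (fun x => p x ∈ V e.2)).card)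
    (hmatch : ∀ e ∈ M, ∀ e' ∈ M, e ≠ e' → e.1 ≠ e'.1 ∧ e.2 ≠ e'.2) :
    HasTwins n M.card p := by
  classical
  rcases M.eq_empty_or_nonempty with hM | hM
  · subst hM
    refine ⟨Fin.elim0, Fin.elim0, fun k => k.elim0, fun k => k.elim0,
      fun k => k.elim0, fun k => k.elim0⟩
  · obtain ⟨e0, he0⟩ := hM
    have hn : Nonempty (Fin n) := by
      have h2 := hedge e0 he0
      have hpos : 0 < ((P e0.1).filter (fun x => p x ∈ V e0.2)).card := by omega
      obtain ⟨x, _⟩ := Finset.card_pos.mp hpos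
      exact ⟨x⟩
    have hpair : ∀ e : Fin r × Fin r, ∃ a b : Fin n, e ∈ M →
        a < b ∧ a ∈ P e.1 ∧ b ∈ P e.1 ∧ p a ∈ V e.2 ∧ p b ∈ V e.2 := by
      intro e
      by_cases he : e ∈ M
      · obtain ⟨a, ha, b, hb, hab⟩ := Finset.one_lt_card.mp (hedge e he)
        rw [Finset.mem_filter] at ha hb
        rcases hab.lt_or_gt with h | h
        · exact ⟨a, b, fun _ => ⟨h, ha.1, hb.1, ha.2, hb.2⟩⟩
        · exact ⟨b, a, fun _ => ⟨h, hb.1, ha.1, hb.2, ha.2⟩⟩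
      · exact ⟨Classical.arbitrary _, Classical.arbitrary _, fun h => absurd h he⟩
    choose xf yf hfp using hpair
    have hxy : ∀ e ∈ M, xf e < yf e := fun e he => (hfp e he).1
    have hxP : ∀ e ∈ M, xf e ∈ P e.1 := fun e he => (hfp e he).2.1
    have hyP : ∀ e ∈ M, yf e ∈ P e.1 := fun e he => (hfp e he).2.2.1
    have hxV : ∀ e ∈ M, p (xf e) ∈ V e.2 := fun e he => (hfp e he).2.2.2.1
    have hyV : ∀ e ∈ M, p (yf e) ∈ V e.2 := fun e he => (hfp e he).2.2.2.2
    have hinj : Set.InjOn xf M := by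
      intro e he e' he' hEq
      by_contra hne
      have h1 := (hmatch e he e' he' hne).1
      exact Finset.disjoint_left.mp (hPdisj _ _ h1) (hxP e he) (hEq ▸ hxP e' he')
    set X : Finset (Fin n) := M.image xf with hX
    have hXcard : X.card = M.card := Finset.card_image_of_injOn hinj
    set σ := X.orderIsoOfFin hXcard with hσdef
    have hσ : ∀ k, ∃ e ∈ M, xf e = (σ k : Fin n) := fun k => Finset.mem_image.mp (σ k).2
    choose E hEM hEx using hσ
    have hiσ : ∀ k, xf (E k) = (σ k : Fin n) := hEx
    have hmonoi : StrictMono fun k => xf (E k) := by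
      intro k l hkl
      simp only [hiσ k, hiσ l]
      exact_mod_cast σ.strictMono hkl
    have hEinj : ∀ k l, k ≠ l → E k ≠ E l := by
      intro k l hkl hE
      apply hkl
      apply σ.injective
      apply Subtype.ext
      rw [← hiσ k, ← hiσ l, hE]
    refine ⟨fun k => xf (E k), fun k => yf (E k), hmonoi, ?_, ?_, ?_⟩
    · intro k l hkl
      have hne := hEinj _ _ (ne_of_lt hkl)
      have h1 := (hmatch _ (hEM k) _ (hEM l) hne).1
      exact convex_sep (hPconv (E k).1) (hPconv (E l).1) (hPdisj _ _ h1)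
        (hxP _ (hEM k)) (hyP _ (hEM k)) (hxP _ (hEM l)) (hyP _ (hEM l)) (hmonoi hkl)
    · intro k l
      show xf (E k) ≠ yf (E l)
      by_cases hE : E k = E l
      · rw [hE]
        exact ne_of_lt (hxy _ (hEM l))
      · have h1 := (hmatch _ (hEM k) _ (hEM l) hE).1
        intro hEq
        exact Finset.disjoint_left.mp (hPdisj _ _ h1) (hxP _ (hEM k)) (hEq ▸ hyP _ (hEM l))
    · intro k l
      rcases eq_or_ne k l with rfl | hkl
      · simp
      · have hne := hEinj _ _ hkl
        have h2 := (hmatch _ (hEM k) _ (hEM l) hne).2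
        constructor
        · intro h
          exact convex_sep (hVconv (E k).2) (hVconv (E l).2) (hVdisj _ _ h2)
            (hxV _ (hEM k)) (hyV _ (hEM k)) (hxV _ (hEM l)) (hyV _ (hEM l)) h
        · intro h
          exact convex_sep (hVconv (E k).2) (hVconv (E l).2) (hVdisj _ _ h2)
            (hyV _ (hEM k)) (hxV _ (hEM k)) (hyV _ (hEM l)) (hxV _ (hEM l)) h
end
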